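/- The van der Corput sequence in base 2 is a best-discrepancy sequence: there exists a constant c > 0 such that for every integer N ≥ 2, the discrepancy of its first N terms satisfies D_N ≤ c·N^(−1)·log N; in particular, for every ε > 0 there is a constant c' > 0 with D_N ≤ c'·N^(−1+ε) for all N ≥ 1. -/

import Mathlib

open scoped Classical

/-- The discrepancy `D_N` of the first `N` terms (indices `1,…,N`) of a sequence
`x : ℕ → ℝ` in `[0,1)`:  `D_N = sup_{0 ≤ a < b < 1} | C([a,b);N)/N − (b−a) |`. -/
noncomputable def discrepancy (x : ℕ → ℝ) (N : ℕ) : ℝ :=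
  sSup {t : ℝ | ∃ a b : ℝ, 0 ≤ a ∧ a < b ∧ b < 1 ∧
    t = |(((Finset.Icc 1 N).filter (fun n => x n ∈ Set.Ico a b)).card : ℝ) / N - (b - a)|}

/-- The van der Corput sequence in base 2: if `n = Σ_j a_j · 2^j` with binary digits
`a_j ∈ {0,1}`, then `x_n = Σ_j a_j · 2^(−j−1)` (binary digit reversal). -/
noncomputable def vanDerCorput (n : ℕ) : ℝ :=
  ∑ j ∈ Finset.range (Nat.digits 2 n).length,
    ((Nat.digits 2 n).getD j 0 : ℝ) / 2 ^ (j + 1)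

lemma vdc_zero : vanDerCorput 0 = 0 := by simp [vanDerCorput]

lemma vdc_rec (n : ℕ) :
    vanDerCorput n = (n % 2 : ℕ) / 2 + vanDerCorput (n / 2) / 2 := by
  rcases Nat.eq_zero_or_pos n with h | h
  · subst h; simp [vdc_zero]
  · unfold vanDerCorput
    rw [Nat.digits_def' (by norm_num) h]
    rw [List.length_cons, Finset.sum_range_succ']
    simp only [List.getD_cons_succ, List.getD_cons_zero]
    rw [add_comm]
    congr 1
    · norm_num
    · rw [Finset.sum_div]
      refine Finset.sum_congr rfl fun j _ => ?_
      rw [div_div]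
      ring_nf

lemma vdc_nonneg (n : ℕ) : 0 ≤ vanDerCorput n := by
  apply Finset.sum_nonneg
  intro j _
  positivity

lemma vdc_lt_one (n : ℕ) : vanDerCorput n < 1 := by
  induction n using Nat.strong_induction_on with
  | _ n ih =>
    rcases Nat.eq_zero_or_pos n with h | h
    · subst h; rw [vdc_zero]; norm_num
    · rw [vdc_rec]
      have h1 : vanDerCorput (n / 2) < 1 := ih _ (Nat.div_lt_self h one_lt_two)
      have h2 : (n % 2 : ℕ) ≤ 1 := Nat.lt_succ_iff.mp (Nat.mod_lt n two_pos)
      have h2' : ((n % 2 : ℕ) : ℝ) ≤ 1 := by exact_mod_cast h2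
      linarith

/-- `vdC (q·2^k + r) = vdC r + vdC q / 2^k` when `r < 2^k`. -/
lemma vdc_add (k : ℕ) : ∀ q r : ℕ, r < 2 ^ k →
    vanDerCorput (q * 2 ^ k + r) = vanDerCorput r + vanDerCorput q / 2 ^ k := by
  induction k with
  | zero =>
    intro q r hr
    interval_cases r
    simp [vdc_zero]
  | succ k ih =>
    intro q r hr
    have hp : q * 2 ^ (k + 1) = (q * 2 ^ k) * 2 := by ring
    have e1 : (q * 2 ^ (k + 1) + r) % 2 = r % 2 := by
      rw [hp]; omega
    have e2 : (q * 2 ^ (k + 1) + r) / 2 = q * 2 ^ k + r / 2 := by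
      rw [hp]; omega
    rw [vdc_rec (q * 2 ^ (k+1) + r), e1, e2, ih q (r / 2) (by omega),
      vdc_rec r]
    rw [pow_succ]
    ring

/-- bit reversal of the lowest `k` bits -/
def rev : ℕ → ℕ → ℕ
  | 0, _ => 0
  | (k+1), r => r % 2 * 2 ^ k + rev k (r / 2)

lemma rev_lt (k : ℕ) : ∀ r, rev k r < 2 ^ k := by
  induction k with
  | zero => intro r; simp [rev]
  | succ k ih =>
    intro r
    have := ih (r / 2)
    have : r % 2 ≤ 1 := by omega
    simp only [rev, pow_succ]
    have := ih (r / 2)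
    nlinarith [ih (r/2)]

lemma vdc_eq_rev (k : ℕ) : ∀ r, r < 2 ^ k → vanDerCorput r = (rev k r : ℝ) / 2 ^ k := by
  induction k with
  | zero =>
    intro r hr
    interval_cases r
    simp [vdc_zero, rev]
  | succ k ih =>
    intro r hr
    rw [vdc_rec, ih (r / 2) (by omega)]
    simp only [rev]
    push_cast
    rw [pow_succ]
    field_simp

lemma rev_inj (k : ℕ) : ∀ r s, r < 2 ^ k → s < 2 ^ k → rev k r = rev k s → r = s := by
  induction k with
  | zero => intro r s hr hs _; omega
  | succ k ih =>
    intro r s hr hs h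
    simp only [rev] at h
    have h1 := rev_lt k (r / 2)
    have h2 := rev_lt k (s / 2)
    have hp : (2:ℕ) ^ (k + 1) = 2 ^ k * 2 := pow_succ 2 k
    have hd : r / 2 = s / 2 := by
      refine ih _ _ (by omega) (by omega) ?_
      rcases Nat.mod_two_eq_zero_or_one r with h3 | h3 <;>
        rcases Nat.mod_two_eq_zero_or_one s with h4 | h4 <;>
          rw [h3, h4] at h <;> omega
    have hm : r % 2 = s % 2 := by
      rw [hd] at h
      rcases Nat.mod_two_eq_zero_or_one r with h3 | h3 <;>
        rcases Nat.mod_two_eq_zero_or_one s with h4 | h4 <;>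
          rw [h3, h4] at h <;> omega
    omega

lemma rev_surj (k : ℕ) (m : ℕ) (hm : m < 2 ^ k) : ∃ r < 2 ^ k, rev k r = m := by
  have hsub : Finset.image (rev k) (Finset.range (2 ^ k)) ⊆ Finset.range (2 ^ k) := by
    intro x hx
    simp only [Finset.mem_image, Finset.mem_range] at hx ⊢
    obtain ⟨r, _, rfl⟩ := hx
    exact rev_lt k r
  have hcard : (Finset.image (rev k) (Finset.range (2 ^ k))).card
      = (Finset.range (2 ^ k)).card := by
    rw [Finset.card_image_of_injOn]
    intro r hr s hs h
    exact rev_inj k r s (Finset.mem_range.mp hr) (Finset.mem_range.mp hs) h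
  have heq := Finset.eq_of_subset_of_card_le hsub (le_of_eq hcard.symm)
  have : m ∈ Finset.image (rev k) (Finset.range (2 ^ k)) := by
    rw [heq]; exact Finset.mem_range.mpr hm
  simp only [Finset.mem_image, Finset.mem_range] at this
  obtain ⟨r, hr, hrev⟩ := this
  exact ⟨r, hr, hrev⟩

/-- membership of vdC n in the dyadic interval determined by its residue -/
lemma vdc_mem (k n : ℕ) :
    vanDerCorput n ∈ Set.Ico ((rev k (n % 2 ^ k) : ℝ) / 2 ^ k)
      ((rev k (n % 2 ^ k) + 1 : ℝ) / 2 ^ k) := by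
  have h2k : (0:ℝ) < 2 ^ k := by positivity
  have hn : n = (n / 2 ^ k) * 2 ^ k + n % 2 ^ k := (Nat.div_add_mod' n (2^k)).symm
  have hr : n % 2 ^ k < 2 ^ k := Nat.mod_lt n (by positivity)
  have := vdc_add k (n / 2 ^ k) (n % 2 ^ k) hr
  rw [← hn] at this
  rw [this, vdc_eq_rev k _ hr]
  constructor
  · have := vdc_nonneg (n / 2 ^ k)
    have : 0 ≤ vanDerCorput (n / 2 ^ k) / 2 ^ k := by positivity
    linarith
  · have h1 : vanDerCorput (n / 2 ^ k) < 1 := vdc_lt_one _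
    rw [← add_div, div_lt_div_iff₀ h2k h2k]
    nlinarith

lemma mod_iff_dvd (M r N : ℕ) (hM : 0 < M) (hr : r < M) :
    ((N + 1) % M = r) ↔ M ∣ (N + M - (if r = 0 then M else r)) + 1 := by
  split_ifs with h0
  · subst h0
    have e : N + M - M + 1 = N + 1 := by omega
    rw [e, Nat.dvd_iff_mod_eq_zero]
  · have hr0 : 0 < r := Nat.pos_of_ne_zero h0
    rcases le_or_gt r (N + 1) with hrN | hrN
    · have e : (N + M - r) + 1 = ((N + 1) - r) + M := by omega
      rw [e]
      rw [Nat.dvd_add_self_right]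
      rw [← Nat.modEq_iff_dvd' hrN]
      unfold Nat.ModEq
      rw [Nat.mod_eq_of_lt hr]
      exact ⟨fun h => h.symm, fun h => h.symm⟩
    · constructor
      · intro h
        have := Nat.mod_le (N + 1) M
        omega
      · intro h
        have hpos : 0 < (N + M - r) + 1 := by omega
        have := Nat.le_of_dvd hpos h
        omega

lemma count_mod (M r : ℕ) (hM : 0 < M) (hr : r < M) : ∀ N : ℕ,
    ((Finset.Icc 1 N).filter (fun n => n % M = r)).card
      = (N + M - (if r = 0 then M else r)) / M := by
  intro N
  induction N with
  | zero =>
    simp only [Finset.Icc_self, Nat.zero_add]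
    rw [show Finset.Icc 1 0 = ∅ by simp, Finset.filter_empty, Finset.card_empty]
    rw [Nat.div_eq_of_lt (by split_ifs <;> omega)]
  | succ N ih =>
    have hins : Finset.Icc 1 (N + 1) = insert (N + 1) (Finset.Icc 1 N) := by
      exact (Finset.insert_Icc_right_eq_Icc_add_one (by omega)).symm
    have hnm : (N + 1) ∉ Finset.Icc 1 N := by simp
    have e1 : N + 1 + M - (if r = 0 then M else r) = (N + M - (if r = 0 then M else r)) + 1 := by
      split_ifs <;> omega
    rw [hins, Finset.filter_insert, e1, Nat.succ_div]
    by_cases h : (N + 1) % M = r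
    · rw [if_pos h, Finset.card_insert_of_notMem (fun hc => hnm (Finset.mem_filter.mp hc).1),
        ih, if_pos ((mod_iff_dvd M r N hM hr).mp h)]
    · rw [if_neg h, ih, if_neg (fun hd => h ((mod_iff_dvd M r N hM hr).mpr hd)), Nat.add_zero]

/-- real bound for residue counts -/
lemma count_mod_bound (M r N : ℕ) (hM : 0 < M) (hr : r < M) :
    |(((Finset.Icc 1 N).filter (fun n => n % M = r)).card : ℝ) - (N : ℝ) / M| ≤ 1 := by
  rw [count_mod M r hM hr N]
  set r' : ℕ := if r = 0 then M else r with hr'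
  have hr'1 : 1 ≤ r' ∧ r' ≤ M := by constructor <;> (rw [hr']; split_ifs <;> omega)
  set a : ℕ := N + M - r' with ha
  have hup : (a / M : ℕ) ≤ (a : ℝ) / M := Nat.cast_div_le
  have hlow : (a : ℝ) / M - 1 < ((a / M : ℕ) : ℝ) := by
    have h1 : a < M * (a / M + 1) := Nat.lt_mul_div_succ a hM
    have h2 : ((a : ℝ)) < (M : ℝ) * ((a / M : ℕ) + 1) := by exact_mod_cast h1
    have hMR : (0:ℝ) < M := by exact_mod_cast hM
    rw [div_sub_one (ne_of_gt hMR), div_lt_iff₀ hMR]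
    nlinarith
  have haR : (a : ℝ) = (N : ℝ) + M - r' := by
    have : (a : ℕ) + r' = N + M := by omega
    have := congrArg (fun x : ℕ => (x : ℝ)) this
    push_cast at this
    linarith
  have hMR : (0:ℝ) < M := by exact_mod_cast hM
  have hr'R1 : 1 ≤ (r' : ℝ) := by exact_mod_cast hr'1.1
  have hr'R2 : (r' : ℝ) ≤ M := by exact_mod_cast hr'1.2
  have hx1 : ((a / M : ℕ) : ℝ) * M ≤ (a : ℝ) := by rw [← le_div_iff₀ hMR]; exact hup
  have hx2 : (a : ℝ) < (((a / M : ℕ) : ℝ) + 1) * M := by rw [← div_lt_iff₀ hMR]; linarith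
  rw [abs_le]
  constructor
  · have h5 : (N : ℝ) / M ≤ ((a / M : ℕ) : ℝ) + 1 := by
      rw [div_le_iff₀ hMR]; nlinarith
    linarith
  · have h5 : (((a / M : ℕ) : ℝ) - 1) * M ≤ (N : ℝ) := by nlinarith
    have h6 : ((a / M : ℕ) : ℝ) - 1 ≤ (N : ℝ) / M := by
      rw [le_div_iff₀ hMR]; exact h5
    linarith

/-- count of points in a dyadic interval deviates from the expected value by ≤ 1 -/
lemma dyadic_count (k m N : ℕ) (hm : m < 2 ^ k) :
    |(((Finset.Icc 1 N).filter (fun n => vanDerCorput n ∈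
        Set.Ico ((m : ℝ) / 2 ^ k) (((m : ℝ) + 1) / 2 ^ k))).card : ℝ) - (N : ℝ) / 2 ^ k| ≤ 1 := by
  obtain ⟨r, hr, hrev⟩ := rev_surj k m hm
  have hiff : ∀ n : ℕ, (vanDerCorput n ∈
      Set.Ico ((m : ℝ) / 2 ^ k) (((m : ℝ) + 1) / 2 ^ k)) ↔ n % 2 ^ k = r := by
    intro n
    constructor
    · rintro ⟨h1, h2⟩
      obtain ⟨h3, h4⟩ := vdc_mem k n
      have h2k : (0:ℝ) < 2 ^ k := by positivity
      have e1 : (rev k (n % 2 ^ k) : ℝ) < (m : ℝ) + 1 := by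
        have := lt_of_le_of_lt h3 h2
        rw [div_lt_div_iff₀ h2k h2k] at this
        nlinarith
      have e2 : (m : ℝ) < (rev k (n % 2 ^ k) : ℝ) + 1 := by
        have := lt_of_le_of_lt h1 h4
        rw [div_lt_div_iff₀ h2k h2k] at this
        nlinarith
      have e1' : rev k (n % 2 ^ k) < m + 1 := by exact_mod_cast e1
      have e2' : m < rev k (n % 2 ^ k) + 1 := by exact_mod_cast e2
      have heq : rev k (n % 2 ^ k) = m := by omega
      exact rev_inj k _ r (Nat.mod_lt n (by positivity)) hr (heq.trans hrev.symm)
    · intro h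
      have := vdc_mem k n
      rw [h, hrev] at this
      exact this
  rw [Finset.filter_congr (fun n _ => hiff n)]
  have := count_mod_bound (2 ^ k) r N (by positivity) hr
  convert this using 3
  · push_cast; ring

noncomputable def cnt (N : ℕ) (b : ℝ) : ℕ :=
  ((Finset.Icc 1 N).filter (fun n => vanDerCorput n < b)).card

lemma cnt_split (N : ℕ) {c d : ℝ} (hcd : c ≤ d) :
    cnt N d = cnt N c +
      ((Finset.Icc 1 N).filter (fun n => vanDerCorput n ∈ Set.Ico c d)).card := by
  unfold cnt
  have hiff : ∀ n ∈ Finset.Icc 1 N, (vanDerCorput n < d) ↔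
      (vanDerCorput n < c ∨ vanDerCorput n ∈ Set.Ico c d) := by
    intro n _
    simp only [Set.mem_Ico]
    constructor
    · intro h
      rcases lt_or_ge (vanDerCorput n) c with h' | h'
      · exact Or.inl h'
      · exact Or.inr ⟨h', h⟩
    · rintro (h | ⟨h1, h2⟩)
      · linarith
      · exact h2
  rw [Finset.filter_congr hiff, Finset.filter_or,
    Finset.card_union_of_disjoint]
  rw [Finset.disjoint_left]
  intro n hn hn'
  simp only [Finset.mem_filter, Set.mem_Ico] at hn hn'
  linarith [hn.2, hn'.2.1]

lemma cnt_mono (N : ℕ) {c d : ℝ} (hcd : c ≤ d) : cnt N c ≤ cnt N d := by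
  apply Finset.card_le_card
  intro n hn
  rw [Finset.mem_filter] at hn ⊢
  exact ⟨hn.1, lt_of_lt_of_le hn.2 hcd⟩

lemma cnt_main (N : ℕ) : ∀ k : ℕ, ∀ m : ℕ, m ≤ 2 ^ k →
    |(cnt N ((m : ℝ) / 2 ^ k) : ℝ) - (N : ℝ) * m / 2 ^ k| ≤ k := by
  intro k
  induction k with
  | zero =>
    intro m hm
    interval_cases m
    · have : cnt N ((0 : ℕ) / 2 ^ 0 : ℝ) = 0 := by
        unfold cnt
        rw [Finset.filter_false_of_mem, Finset.card_empty]
        intro n _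
        simp only [Nat.cast_zero, pow_zero, zero_div, not_lt]
        exact vdc_nonneg n
      rw [this]
      simp
    · have : cnt N ((1 : ℕ) / 2 ^ 0 : ℝ) = N := by
        unfold cnt
        rw [Finset.filter_true_of_mem, Nat.card_Icc]
        · omega
        · intro n _
          simp only [Nat.cast_one, pow_zero, div_one]
          exact vdc_lt_one n
      rw [this]
      simp
  | succ k ih =>
    intro m hm
    rcases Nat.even_or_odd m with ⟨m', rfl⟩ | ⟨m', rfl⟩
    · have hm' : m' ≤ 2 ^ k := by
        have : (2:ℕ) ^ (k+1) = 2 ^ k * 2 := pow_succ 2 k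
        omega
      have e1 : ((m' + m' : ℕ) : ℝ) / 2 ^ (k + 1) = (m' : ℝ) / 2 ^ k := by
        push_cast
        rw [pow_succ]
        field_simp
        ring
      have e2 : (N : ℝ) * (m' + m' : ℕ) / 2 ^ (k + 1) = (N : ℝ) * m' / 2 ^ k := by
        push_cast
        rw [pow_succ]
        field_simp
        ring
      rw [e1, e2]
      have := ih m' hm'
      have hk : (k : ℝ) ≤ (k : ℝ) + 1 := by linarith
      calc |(cnt N ((m' : ℝ) / 2 ^ k) : ℝ) - (N : ℝ) * m' / 2 ^ k| ≤ k := this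
        _ ≤ ((k : ℝ) + 1) := hk
        _ = ((k + 1 : ℕ) : ℝ) := by push_cast; ring
    · have hm' : m' < 2 ^ k := by
        have : (2:ℕ) ^ (k+1) = 2 ^ k * 2 := pow_succ 2 k
        omega
      have h2k : (0:ℝ) < 2 ^ (k+1) := by positivity
      have hcd : ((2 * m' : ℕ) : ℝ) / 2 ^ (k + 1) ≤ ((2 * m' + 1 : ℕ) : ℝ) / 2 ^ (k + 1) := by
        gcongr
        push_cast; linarith
      have hsplit := cnt_split N hcd
      -- dyadic count for the added interval
      have hdy := dyadic_count (k + 1) (2 * m') N (by omega)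
      have ed : (((2 * m' : ℕ) : ℝ) + 1) / 2 ^ (k+1) = ((2 * m' + 1 : ℕ) : ℝ) / 2 ^ (k+1) := by
        push_cast; ring
      rw [ed] at hdy
      -- lower-level count
      have e1 : ((2 * m' : ℕ) : ℝ) / 2 ^ (k + 1) = (m' : ℝ) / 2 ^ k := by
        push_cast
        rw [pow_succ]
        field_simp
      have hih := ih m' (le_of_lt hm')
      rw [← e1] at hih
      -- identity for the expected value
      have e2 : (N : ℝ) * (2 * m' + 1 : ℕ) / 2 ^ (k + 1)
          = (N : ℝ) * m' / 2 ^ k + (N : ℝ) / 2 ^ (k + 1) := by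
        push_cast
        rw [pow_succ]
        field_simp
      have e3 : (N : ℝ) * (2 * m' : ℕ) / 2 ^ (k + 1) = (N : ℝ) * m' / 2 ^ k := by
        push_cast
        rw [pow_succ]
        field_simp
      rw [← e3] at hih
      rw [abs_le] at hih hdy ⊢
      have hc : ((cnt N (((2 * m' + 1 : ℕ) : ℝ) / 2 ^ (k+1)) : ℕ) : ℝ)
          = (cnt N (((2 * m' : ℕ) : ℝ) / 2 ^ (k+1)) : ℝ)
            + (((Finset.Icc 1 N).filter (fun n => vanDerCorput n ∈
                Set.Ico (((2 * m' : ℕ) : ℝ) / 2 ^ (k+1))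
                  (((2 * m' + 1 : ℕ) : ℝ) / 2 ^ (k+1)))).card : ℝ) := by
        exact_mod_cast congrArg (fun x : ℕ => (x : ℝ)) hsplit
      push_cast only [Nat.cast_add, Nat.cast_one] at *
      constructor <;> [skip; skip] <;>
        (rw [e2]; rw [hc]) <;> linarith [hih.1, hih.2, hdy.1, hdy.2]

lemma cnt_bound (N k : ℕ) {b : ℝ} (hb0 : 0 ≤ b) (hb1 : b < 1) :
    |(cnt N b : ℝ) - (N : ℝ) * b| ≤ (k : ℝ) + (N : ℝ) / 2 ^ k := by
  have h2k : (0:ℝ) < 2 ^ k := by positivity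
  set m : ℕ := ⌊b * 2 ^ k⌋₊ with hmdef
  have hfl : (m : ℝ) ≤ b * 2 ^ k := Nat.floor_le (by positivity)
  have hfu : b * 2 ^ k < (m : ℝ) + 1 := Nat.lt_floor_add_one _
  have hmlt : m < 2 ^ k := by
    have : (m : ℝ) < (2 ^ k : ℕ) := by
      push_cast
      calc (m : ℝ) ≤ b * 2 ^ k := hfl
        _ < 1 * 2 ^ k := by nlinarith
        _ = 2 ^ k := by ring
    exact_mod_cast this
  have hlb : (m : ℝ) / 2 ^ k ≤ b := by rw [div_le_iff₀ h2k]; linarith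
  have hub : b < ((m + 1 : ℕ) : ℝ) / 2 ^ k := by
    rw [lt_div_iff₀ h2k]; push_cast; linarith
  have h1 := cnt_main N k m (le_of_lt hmlt)
  have h2 := cnt_main N k (m + 1) hmlt
  have hmono1 : (cnt N ((m : ℝ) / 2 ^ k) : ℝ) ≤ (cnt N b : ℝ) := by
    exact_mod_cast cnt_mono N hlb
  have hmono2 : (cnt N b : ℝ) ≤ (cnt N (((m + 1 : ℕ) : ℝ) / 2 ^ k) : ℝ) := by
    exact_mod_cast cnt_mono N (le_of_lt hub)
  rw [abs_le] at h1 h2 ⊢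
  have em : (N : ℝ) * ((m + 1 : ℕ) : ℝ) / 2 ^ k = (N : ℝ) * m / 2 ^ k + (N : ℝ) / 2 ^ k := by
    push_cast; ring
  have hNb1 : (N : ℝ) * m / 2 ^ k ≤ (N : ℝ) * b := by
    rw [mul_div_assoc]
    exact mul_le_mul_of_nonneg_left hlb (Nat.cast_nonneg N)
  have hNb2 : (N : ℝ) * b ≤ (N : ℝ) * m / 2 ^ k + (N : ℝ) / 2 ^ k := by
    rw [← em, mul_div_assoc]
    exact mul_le_mul_of_nonneg_left (le_of_lt hub) (Nat.cast_nonneg N)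
  constructor
  · linarith [h1.1, h2.1]
  · have := h2.2
    rw [em] at this
    linarith [h1.2]

lemma interval_bound (N k : ℕ) (hN : 1 ≤ N) {a b : ℝ} (ha : 0 ≤ a) (hab : a < b) (hb : b < 1) :
    |(((Finset.Icc 1 N).filter (fun n => vanDerCorput n ∈ Set.Ico a b)).card : ℝ) / N - (b - a)|
      ≤ (2 * k + 2 * (N : ℝ) / 2 ^ k) / N := by
  have hNR : (0:ℝ) < N := by exact_mod_cast hN
  have hsplit := cnt_split N (le_of_lt hab)
  have hcard : (((Finset.Icc 1 N).filter (fun n => vanDerCorput n ∈ Set.Ico a b)).card : ℝ)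
      = (cnt N b : ℝ) - (cnt N a : ℝ) := by
    have := congrArg (fun x : ℕ => (x : ℝ)) hsplit
    push_cast at this
    linarith
  have hba := cnt_bound N k (le_trans ha (le_of_lt hab)) hb
  have haa := cnt_bound N k ha (lt_trans hab hb)
  rw [abs_le] at hba haa
  have key : |(((Finset.Icc 1 N).filter (fun n => vanDerCorput n ∈ Set.Ico a b)).card : ℝ)
      - (N : ℝ) * (b - a)| ≤ 2 * k + 2 * (N : ℝ) / 2 ^ k := by
    rw [abs_le, hcard]
    have e2 : 2 * (N:ℝ) / 2 ^ k = 2 * ((N:ℝ) / 2 ^ k) := by ring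
    rw [e2]
    constructor
    · have h1 := hba.1
      have h2 := haa.2
      nlinarith
    · have h1 := hba.2
      have h2 := haa.1
      nlinarith
  have e : (((Finset.Icc 1 N).filter (fun n => vanDerCorput n ∈ Set.Ico a b)).card : ℝ) / N
      - (b - a) = ((((Finset.Icc 1 N).filter (fun n => vanDerCorput n ∈ Set.Ico a b)).card : ℝ)
      - (N : ℝ) * (b - a)) / N := by
    field_simp
  rw [e, abs_div, abs_of_pos hNR]
  gcongr

lemma discrepancy_le_one (N : ℕ) (hN : 1 ≤ N) : discrepancy vanDerCorput N ≤ 1 := by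
  apply Real.sSup_le _ zero_le_one
  rintro t ⟨a, b, ha, hab, hb, rfl⟩
  have hNR : (0:ℝ) < N := by exact_mod_cast hN
  have hcard : (((Finset.Icc 1 N).filter (fun n => vanDerCorput n ∈ Set.Ico a b)).card : ℝ) ≤ N := by
    have h1 : ((Finset.Icc 1 N).filter (fun n => vanDerCorput n ∈ Set.Ico a b)).card
        ≤ (Finset.Icc 1 N).card := Finset.card_filter_le _ _
    have h2 : (Finset.Icc 1 N).card = N := by rw [Nat.card_Icc]; omega
    exact_mod_cast h1.trans_eq h2
  have hpos : (0:ℝ) ≤ (((Finset.Icc 1 N).filter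
      (fun n => vanDerCorput n ∈ Set.Ico a b)).card : ℝ) := by positivity
  rw [abs_le]
  constructor
  · have : (0:ℝ) ≤ (((Finset.Icc 1 N).filter
        (fun n => vanDerCorput n ∈ Set.Ico a b)).card : ℝ) / N := by positivity
    linarith
  · have : (((Finset.Icc 1 N).filter (fun n => vanDerCorput n ∈ Set.Ico a b)).card : ℝ) / N
        ≤ 1 := by rw [div_le_one hNR]; exact hcard
    linarith

/-- The van der Corput sequence in base 2 is a best-discrepancy sequence: there is
`c > 0` with `D_N ≤ c · N⁻¹ · log N` for all `N ≥ 2`; in particular, for every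
`ε > 0` there is `c' > 0` with `D_N ≤ c' · N^(−1+ε)` for all `N ≥ 1`. -/
theorem vanDerCorput_best_discrepancy :
    (∃ c : ℝ, 0 < c ∧ ∀ N : ℕ, 2 ≤ N →
      discrepancy vanDerCorput N ≤ c * (N : ℝ)⁻¹ * Real.log N)
    ∧ (∀ ε : ℝ, 0 < ε → ∃ c' : ℝ, 0 < c' ∧ ∀ N : ℕ, 1 ≤ N →
      discrepancy vanDerCorput N ≤ c' * (N : ℝ) ^ (-1 + ε)) := by
  have hlog2 : (0:ℝ) < Real.log 2 := Real.log_pos (by norm_num)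
  have main : ∀ N : ℕ, 2 ≤ N →
      discrepancy vanDerCorput N ≤ (6 / Real.log 2) * (N : ℝ)⁻¹ * Real.log N := by
    intro N hN
    have hNR : (0:ℝ) < N := by positivity
    have hN2 : (2:ℝ) ≤ N := by exact_mod_cast hN
    have hlogN : Real.log 2 ≤ Real.log N := Real.log_le_log (by norm_num) hN2
    set k : ℕ := Nat.clog 2 N with hk
    have hk1 : 1 ≤ k := Nat.clog_pos one_lt_two hN
    have hup : N ≤ 2 ^ k := Nat.le_pow_clog one_lt_two N
    have hlow : 2 ^ (k - 1) < N := Nat.pow_pred_clog_lt_self one_lt_two (by omega)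
    -- bound on k
    have hkR : ((k:ℝ) - 1) * Real.log 2 ≤ Real.log N := by
      have h1 : ((2:ℝ)) ^ (k - 1) ≤ (N : ℝ) := by
        exact_mod_cast hlow.le
      have h2 := Real.log_le_log (by positivity) h1
      rw [Real.log_pow] at h2
      have e : (((k - 1 : ℕ)) : ℝ) = (k : ℝ) - 1 := by
        have : (1:ℕ) ≤ k := hk1
        push_cast [Nat.cast_sub this]
        ring
      rw [e] at h2
      exact h2
    -- apply sSup bound
    apply Real.sSup_le
    · rintro t ⟨a, b, ha, hab, hb, rfl⟩
      have h1 := interval_bound N k (by omega) ha hab hb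
      refine h1.trans ?_
      -- (2k + 2N/2^k)/N ≤ (6/log2) * N⁻¹ * log N
      have h2 : 2 * (N:ℝ) / 2 ^ k ≤ 2 := by
        rw [div_le_iff₀ (by positivity : (0:ℝ) < 2 ^ k)]
        have : (N : ℝ) ≤ 2 ^ k := by exact_mod_cast hup
        linarith
      have h3 : 2 * (k:ℝ) + 2 ≤ (6 / Real.log 2) * Real.log N := by
        rw [div_mul_eq_mul_div, le_div_iff₀ hlog2]
        nlinarith
      have e : 6 / Real.log 2 * ((N:ℝ))⁻¹ * Real.log N * N = 6 / Real.log 2 * Real.log N := by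
        field_simp
      rw [div_le_iff₀ hNR, e]
      linarith
    · positivity
  constructor
  · exact ⟨6 / Real.log 2, by positivity, main⟩
  · intro ε hε
    refine ⟨max ((6 / Real.log 2) / ε) 1, lt_of_lt_of_le zero_lt_one (le_max_right _ _), ?_⟩
    intro N hN
    have hNR : (0:ℝ) < N := by exact_mod_cast hN
    rcases eq_or_lt_of_le hN with h1 | h2
    · -- N = 1
      have : N = 1 := h1.symm
      subst this
      rw [Nat.cast_one, Real.one_rpow, mul_one]
      exact (discrepancy_le_one 1 le_rfl).trans (le_max_right _ _)
    · have hN2 : 2 ≤ N := h2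
      have hmain := main N hN2
      refine hmain.trans ?_
      have hrpow : (N : ℝ) ^ (-1 + ε) = (N : ℝ)⁻¹ * (N : ℝ) ^ ε := by
        rw [Real.rpow_add hNR, Real.rpow_neg_one]
      have hlogle : Real.log N ≤ (N : ℝ) ^ ε / ε := Real.log_le_rpow_div (le_of_lt hNR) hε
      have h6 : (0:ℝ) < 6 / Real.log 2 := by positivity
      calc (6 / Real.log 2) * (N : ℝ)⁻¹ * Real.log N
          ≤ (6 / Real.log 2) * (N : ℝ)⁻¹ * ((N : ℝ) ^ ε / ε) := by
            apply mul_le_mul_of_nonneg_left hlogle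
            positivity
        _ = ((6 / Real.log 2) / ε) * ((N : ℝ)⁻¹ * (N : ℝ) ^ ε) := by ring
        _ ≤ (max ((6 / Real.log 2) / ε) 1) * ((N : ℝ)⁻¹ * (N : ℝ) ^ ε) := by
            apply mul_le_mul_of_nonneg_right (le_max_left _ _)
            positivity
        _ = (max ((6 / Real.log 2) / ε) 1) * (N : ℝ) ^ (-1 + ε) := by rw [hrpow]
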